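/- Let E be a Banach space over 𝕜 and let 𝒜 be a standard subalgebra of B(E). For B ∈ 𝒜 write B⊥ = {D ∈ 𝒜 : D ≠ 0 and D ∘ B = 0}. Then a nonzero operator A ∈ 𝒜 has rank one if and only if there exists B ∈ 𝒜 such that A ∈ B⊥ and there is no C ∈ 𝒜 with C⊥ nonempty and C⊥ a proper subset of B⊥. -/

import Mathlib

set_option synthInstance.maxHeartbeats 400000
set_option maxHeartbeats 1000000

/-- A subalgebra of `B(E)` is *standard* if it contains every continuous finite-rank
operator (it contains the identity automatically, being a subalgebra). -/
def IsStandardSubalgebra (𝕜 : Type*) [RCLike 𝕜] {E : Type*} [NormedAddCommGroup E]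
    [NormedSpace 𝕜 E] (𝒜 : Subalgebra 𝕜 (E →L[𝕜] E)) : Prop :=
  ∀ A : E →L[𝕜] E, FiniteDimensional 𝕜 (LinearMap.range (A : E →ₗ[𝕜] E)) → A ∈ 𝒜

lemma smulRight_mem_std {𝕜 : Type*} [RCLike 𝕜] {E : Type*} [NormedAddCommGroup E]
    [NormedSpace 𝕜 E] {𝒜 : Subalgebra 𝕜 (E →L[𝕜] E)} (h𝒜 : IsStandardSubalgebra 𝕜 𝒜)
    (f : E →L[𝕜] 𝕜) (x : E) : f.smulRight x ∈ 𝒜 := by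
  apply h𝒜
  have hle : LinearMap.range ((f.smulRight x : E →L[𝕜] E) : E →ₗ[𝕜] E)
      ≤ Submodule.span 𝕜 {x} := by
    rintro y ⟨e, rfl⟩
    exact Submodule.smul_mem _ _ (Submodule.mem_span_singleton_self x)
  exact Submodule.finiteDimensional_of_le hle

theorem rank_one_iff_mem_minimal_annihilator
    {𝕜 : Type*} [RCLike 𝕜]
    {E : Type*} [NormedAddCommGroup E] [NormedSpace 𝕜 E] [CompleteSpace E]
    (𝒜 : Subalgebra 𝕜 (E →L[𝕜] E)) (h𝒜 : IsStandardSubalgebra 𝕜 𝒜)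
    (perp : 𝒜 → Set 𝒜) (hperp : ∀ B, perp B = {D : 𝒜 | D ≠ 0 ∧ D * B = 0})
    (A : 𝒜) (hA : A ≠ 0) :
    Module.finrank 𝕜 (LinearMap.range ((A : E →L[𝕜] E) : E →ₗ[𝕜] E)) = 1 ↔
      ∃ B : 𝒜, A ∈ perp B ∧
        ¬∃ C : 𝒜, (perp C).Nonempty ∧ perp C ⊂ perp B := by
  have hAcoe : (A : E →L[𝕜] E) ≠ 0 := fun h => hA (Subtype.ext h)
  constructor
  · -- forward direction
    intro h1
    obtain ⟨v, hv0, hv⟩ := finrank_eq_one_iff'.mp h1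
    set x : E := (v : E) with hxdef
    have hx0 : x ≠ 0 := fun h => hv0 (Subtype.ext h)
    obtain ⟨g, -, hgx⟩ := exists_dual_vector 𝕜 x (norm_ne_zero_iff.mpr hx0)
    have hnx : ((‖x‖ : 𝕜)) ≠ 0 := by
      simpa using norm_ne_zero_iff.mpr hx0
    set f : E →L[𝕜] 𝕜 := (‖x‖ : 𝕜)⁻¹ • (g.comp (A : E →L[𝕜] E)) with hfdef
    have hAf : ∀ e, (A : E →L[𝕜] E) e = f e • x := by
      intro e
      have hmem : (A : E →L[𝕜] E) e ∈
          LinearMap.range ((A : E →L[𝕜] E) : E →ₗ[𝕜] E) := ⟨e, rfl⟩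
      obtain ⟨c, hc⟩ := hv ⟨_, hmem⟩
      have hc' : (A : E →L[𝕜] E) e = c • x := by
        have := congrArg Subtype.val hc
        simpa using this.symm
      have hfe : f e = c := by
        simp only [hfdef, ContinuousLinearMap.smul_apply, ContinuousLinearMap.comp_apply]
        rw [hc']
        rw [map_smul, hgx]
        field_simp
        simp only [smul_eq_mul]
        field_simp
      rw [hfe, hc']
    -- pick e0 with A e0 ≠ 0
    have : ∃ e0, (A : E →L[𝕜] E) e0 ≠ 0 := by
      by_contra h
      push_neg at h
      exact hAcoe (ContinuousLinearMap.ext h)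
    obtain ⟨e0, he0⟩ := this
    have hfe0 : f e0 ≠ 0 := by
      intro h
      rw [hAf e0, h, zero_smul] at he0
      exact he0 rfl
    set x₀ : E := (f e0)⁻¹ • e0 with hx₀def
    have hfx₀ : f x₀ = 1 := by
      rw [hx₀def, map_smul]
      field_simp
      simp only [smul_eq_mul]
      field_simp
    set Bop : E →L[𝕜] E := 1 - f.smulRight x₀ with hBdef
    have hBmem : Bop ∈ 𝒜 := 𝒜.sub_mem 𝒜.one_mem (smulRight_mem_std h𝒜 f x₀)
    set B : 𝒜 := ⟨Bop, hBmem⟩ with hBdef'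
    have hAx₀ : (A : E →L[𝕜] E) x₀ = x := by
      rw [hAf, hfx₀, one_smul]
    -- key: any D with D * B = 0 satisfies D e = f e • D x₀
    have hkey : ∀ D : 𝒜, D * B = 0 → ∀ e, (D : E →L[𝕜] E) e = f e • (D : E →L[𝕜] E) x₀ := by
      intro D hDB e
      have h0 : (D : E →L[𝕜] E) (Bop e) = 0 := by
        have := congrArg Subtype.val hDB
        exact congrFun (congrArg DFunLike.coe this) e
      have hBe : Bop e = e - f e • x₀ := by
        simp [hBdef, ContinuousLinearMap.smulRight_apply]
      rw [hBe] at h0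
      rw [map_sub, map_smul, sub_eq_zero] at h0
      exact h0
    refine ⟨B, ?_, ?_⟩
    · rw [hperp]
      refine ⟨hA, ?_⟩
      apply Subtype.ext
      show (A : E →L[𝕜] E) * Bop = 0
      ext e
      have : (A : E →L[𝕜] E) (Bop e) = 0 := by
        have hBe : Bop e = e - f e • x₀ := by
          simp [hBdef, ContinuousLinearMap.smulRight_apply]
        rw [hBe, map_sub, map_smul, hAx₀, hAf e, sub_self]
      simpa using this
    · rintro ⟨C, ⟨D₀, hD₀C⟩, hsub⟩
      rw [hperp] at hD₀C
      obtain ⟨hD₀0, hD₀Czero⟩ := hD₀C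
      have hD₀B : D₀ * B = 0 := by
        have : D₀ ∈ perp B := hsub.1 (by rw [hperp]; exact ⟨hD₀0, hD₀Czero⟩)
        rw [hperp] at this; exact this.2
      have hy : (D₀ : E →L[𝕜] E) x₀ ≠ 0 := by
        intro h
        apply hD₀0
        apply Subtype.ext
        ext e
        have := hkey D₀ hD₀B e
        rw [h, smul_zero] at this
        simpa using this
      have hfC : ∀ e, f ((C : E →L[𝕜] E) e) = 0 := by
        intro e
        have h0 : (D₀ : E →L[𝕜] E) ((C : E →L[𝕜] E) e) = 0 := by
          have := congrArg Subtype.val hD₀Czero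
          exact congrFun (congrArg DFunLike.coe this) e
        rw [hkey D₀ hD₀B] at h0
        rcases smul_eq_zero.mp h0 with h | h
        · exact h
        · exact absurd h hy
      have hBC : perp B ⊆ perp C := by
        intro D hD
        rw [hperp] at hD ⊢
        refine ⟨hD.1, ?_⟩
        apply Subtype.ext
        show (D : E →L[𝕜] E) * (C : E →L[𝕜] E) = 0
        ext e
        have : (D : E →L[𝕜] E) ((C : E →L[𝕜] E) e) = 0 := by
          rw [hkey D hD.2, hfC, zero_smul]
        simpa using this
      exact hsub.2 hBC
  · -- reverse direction
    rintro ⟨B, hAB, hmin⟩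
    rw [hperp] at hAB
    obtain ⟨-, hAB0⟩ := hAB
    have : ∃ v, (A : E →L[𝕜] E) v ≠ 0 := by
      by_contra h
      push_neg at h
      exact hAcoe (ContinuousLinearMap.ext h)
    obtain ⟨v, hv⟩ := this
    have hv0 : v ≠ 0 := by
      intro h; rw [h, map_zero] at hv; exact hv rfl
    obtain ⟨g, -, hg⟩ := exists_dual_vector 𝕜 ((A : E →L[𝕜] E) v) (norm_ne_zero_iff.mpr hv)
    have hnAv : ((‖(A : E →L[𝕜] E) v‖ : 𝕜)) ≠ 0 := by
      simpa using norm_ne_zero_iff.mpr hv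
    set f : E →L[𝕜] 𝕜 := ((‖(A : E →L[𝕜] E) v‖ : 𝕜))⁻¹ • (g.comp (A : E →L[𝕜] E)) with hfdef
    have hfv : f v = 1 := by
      simp only [hfdef, ContinuousLinearMap.smul_apply, ContinuousLinearMap.comp_apply]
      rw [hg]
      field_simp
      simp only [smul_eq_mul]
      field_simp
    have hfB : ∀ e, f ((B : E →L[𝕜] E) e) = 0 := by
      intro e
      have h0 : (A : E →L[𝕜] E) ((B : E →L[𝕜] E) e) = 0 := by
        have := congrArg Subtype.val hAB0
        exact congrFun (congrArg DFunLike.coe this) e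
      simp only [hfdef, ContinuousLinearMap.smul_apply, ContinuousLinearMap.comp_apply]
      rw [h0, map_zero, smul_zero]
    set Cop : E →L[𝕜] E := 1 - f.smulRight v with hCdef
    have hCmem : Cop ∈ 𝒜 := 𝒜.sub_mem 𝒜.one_mem (smulRight_mem_std h𝒜 f v)
    set C : 𝒜 := ⟨Cop, hCmem⟩ with hCdef'
    have hCe : ∀ e, Cop e = e - f e • v := by
      intro e
      simp [hCdef, ContinuousLinearMap.smulRight_apply]
    -- D₁ := f.smulRight v is in perp C
    set D₁ : 𝒜 := ⟨f.smulRight v, smulRight_mem_std h𝒜 f v⟩ with hD₁def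
    have hD₁0 : D₁ ≠ 0 := by
      intro h
      have := congrArg Subtype.val h
      have h2 : (f.smulRight v) v = 0 := congrFun (congrArg DFunLike.coe this) v
      rw [ContinuousLinearMap.smulRight_apply, hfv, one_smul] at h2
      exact hv0 h2
    have hD₁C : D₁ * C = 0 := by
      apply Subtype.ext
      show (f.smulRight v) * Cop = 0
      ext e
      have : (f.smulRight v) (Cop e) = 0 := by
        rw [hCe, ContinuousLinearMap.smulRight_apply, map_sub, map_smul, hfv]
        simp
      simpa using this
    have hCne : (perp C).Nonempty := ⟨D₁, by rw [hperp]; exact ⟨hD₁0, hD₁C⟩⟩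
    have hCB : perp C ⊆ perp B := by
      intro D hD
      rw [hperp] at hD ⊢
      refine ⟨hD.1, ?_⟩
      have hDC : ∀ e, (D : E →L[𝕜] E) (Cop e) = 0 := by
        intro e
        have := congrArg Subtype.val hD.2
        exact congrFun (congrArg DFunLike.coe this) e
      have hDe : ∀ e, (D : E →L[𝕜] E) e = f e • (D : E →L[𝕜] E) v := by
        intro e
        have := hDC e
        rw [hCe, map_sub, map_smul, sub_eq_zero] at this
        exact this
      apply Subtype.ext
      show (D : E →L[𝕜] E) * (B : E →L[𝕜] E) = 0
      ext e
      have : (D : E →L[𝕜] E) ((B : E →L[𝕜] E) e) = 0 := by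
        rw [hDe, hfB, zero_smul]
      simpa using this
    have heq : perp C = perp B := by
      by_contra hne
      exact hmin ⟨C, hCne, ⟨hCB, fun h => hne (le_antisymm hCB h)⟩⟩
    have hAC : A ∈ perp C := by rw [heq, hperp]; exact ⟨hA, hAB0⟩
    rw [hperp] at hAC
    have hAe : ∀ e, (A : E →L[𝕜] E) e = f e • (A : E →L[𝕜] E) v := by
      intro e
      have h0 : (A : E →L[𝕜] E) (Cop e) = 0 := by
        have := congrArg Subtype.val hAC.2
        exact congrFun (congrArg DFunLike.coe this) e
      rw [hCe, map_sub, map_smul, sub_eq_zero] at h0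
      exact h0
    rw [finrank_eq_one_iff']
    refine ⟨⟨(A : E →L[𝕜] E) v, ⟨v, rfl⟩⟩, ?_, ?_⟩
    · intro h
      exact hv (by simpa using congrArg Subtype.val h)
    · rintro ⟨w, e, rfl⟩
      exact ⟨f e, Subtype.ext (by simpa using (hAe e).symm)⟩
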